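/- Let R be a nonzero commutative ring of characteristic p > 0. If D(R) is a simple ring, then R is a simple D(R)-module: the only additive subgroups N ⊆ R satisfying θ(N) ⊆ N for all θ ∈ D(R) are 0 and R. -/

import Mathlib

/-- `θ` is linear over the subring `R^{p^e}` of `p^e`-th powers. -/
def IsFrobLinear (p : ℕ) {R : Type*} [CommRing R] (e : ℕ) (θ : R →+ R) : Prop :=
  ∀ r x : R, θ (r ^ p ^ e * x) = r ^ p ^ e * θ x

theorem IsFrobLinear.mono {p : ℕ} {R : Type*} [CommRing R] {e e' : ℕ} (h : e ≤ e')
    {θ : R →+ R} (hθ : IsFrobLinear p e θ) : IsFrobLinear p e' θ := by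
  intro r x
  have hr : r ^ p ^ e' = (r ^ p ^ (e' - e)) ^ p ^ e := by
    rw [← pow_mul, ← pow_add, Nat.sub_add_cancel h]
  rw [hr]
  exact hθ _ x

/-- The ring `D(R)` of differential operators on a ring `R` of characteristic `p`:
additive endomorphisms of `R` that are linear over `R^{p^e}` for some `e ≥ 0`. -/
def diffOps (p : ℕ) (R : Type*) [CommRing R] : Subring (AddMonoid.End R) where
  carrier := {θ | ∃ e : ℕ, IsFrobLinear p e (θ : R →+ R)}
  zero_mem' := ⟨0, fun r x => by show (0 : R) = r ^ p ^ 0 * 0; simp⟩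
  one_mem' := ⟨0, fun r x => rfl⟩
  add_mem' := by
    rintro a b ⟨e₁, h₁⟩ ⟨e₂, h₂⟩
    refine ⟨max e₁ e₂, fun r x => ?_⟩
    have ha := h₁.mono (le_max_left e₁ e₂) r x
    have hb := h₂.mono (le_max_right e₁ e₂) r x
    show a (r ^ p ^ (max e₁ e₂) * x) + b (r ^ p ^ (max e₁ e₂) * x)
        = r ^ p ^ (max e₁ e₂) * (a x + b x)
    rw [mul_add]
    exact congrArg₂ (· + ·) ha hb
  neg_mem' := by
    rintro a ⟨e, h⟩
    exact ⟨e, fun r x => by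
      show -(a (r ^ p ^ e * x)) = r ^ p ^ e * -(a x)
      rw [mul_neg]
      exact congrArg Neg.neg (h r x)⟩
  mul_mem' := by
    rintro a b ⟨e₁, h₁⟩ ⟨e₂, h₂⟩
    refine ⟨max e₁ e₂, fun r x => ?_⟩
    show a (b (r ^ p ^ (max e₁ e₂) * x)) = r ^ p ^ (max e₁ e₂) * a (b x)
    exact (congrArg a (h₂.mono (le_max_right e₁ e₂) r x)).trans (h₁.mono (le_max_left e₁ e₂) _ _)


/-- **Proposition.** If `R` is a nonzero commutative ring of characteristic `p > 0` and the
ring `D(R)` of differential operators is simple, then `R` is a simple `D(R)`-module: the only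
additive subgroups of `R` stable under every differential operator are `0` and `R`. -/

theorem simple_dModule_of_diffOps_simple
    (p : ℕ) (hp : p.Prime) (R : Type*) [CommRing R] [Nontrivial R] [CharP R p]
    (hsimple : IsSimpleRing (diffOps p R)) :
    ∀ N : AddSubgroup R, (∀ θ ∈ diffOps p R, ∀ x ∈ N, θ x ∈ N) → N = ⊥ ∨ N = ⊤ := by
  intro N hN
  -- the two-sided ideal of operators with range in N
  set I : TwoSidedIdeal (diffOps p R) := TwoSidedIdeal.mk'
    {θ : diffOps p R | ∀ x : R, (θ : AddMonoid.End R) x ∈ N}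
    (fun x => N.zero_mem)
    (fun {a b} ha hb x => by
      have : ((a + b : diffOps p R) : AddMonoid.End R) x = (a : AddMonoid.End R) x + (b : AddMonoid.End R) x := rfl
      rw [this]; exact N.add_mem (ha x) (hb x))
    (fun {a} ha x => by
      have : ((-a : diffOps p R) : AddMonoid.End R) x = -((a : AddMonoid.End R) x) := rfl
      rw [this]; exact N.neg_mem (ha x))
    (fun {a b} hb x => by
      have : ((a * b : diffOps p R) : AddMonoid.End R) x = (a : AddMonoid.End R) ((b : AddMonoid.End R) x) := rfl
      rw [this]; exact hN _ a.2 _ (hb x))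
    (fun {a b} ha x => by
      have : ((a * b : diffOps p R) : AddMonoid.End R) x = (a : AddMonoid.End R) ((b : AddMonoid.End R) x) := rfl
      rw [this]; exact ha _) with hI
  rcases hsimple.1.eq_bot_or_eq_top I with h | h
  · -- I = ⊥ : show N = ⊥
    left
    ext n
    simp only [AddSubgroup.mem_bot]
    constructor
    · intro hn
      -- mul by n is in diffOps and in I
      have hmem : (AddMonoidHom.mulLeft n : AddMonoid.End R) ∈ diffOps p R := by
        exact ⟨0, fun r x => by simp [mul_left_comm]⟩
      have hIn : (⟨_, hmem⟩ : diffOps p R) ∈ I := by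
        rw [hI]
        refine (TwoSidedIdeal.mem_mk' _ _ _ _ _ _ _).mpr ?_
        intro x
        show n * x ∈ N
        have : n * x = (AddMonoidHom.mulLeft x : AddMonoid.End R) n := by
          simp [mul_comm]
        rw [this]
        exact hN _ ⟨0, fun r y => by simp [mul_left_comm]⟩ _ hn
      rw [h, TwoSidedIdeal.mem_bot] at hIn
      have hn0 : (AddMonoidHom.mulLeft n : AddMonoid.End R) 1 = 0 :=
        congrArg (fun θ : diffOps p R => (θ : AddMonoid.End R) 1) hIn
      calc n = n * 1 := (mul_one n).symm
        _ = 0 := hn0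
    · rintro rfl; exact N.zero_mem
  · -- I = ⊤ : identity is in I, so N = ⊤
    right
    ext x
    simp only [AddSubgroup.mem_top, iff_true]
    have h1 : (1 : diffOps p R) ∈ I := h ▸ TwoSidedIdeal.mem_top _
    rw [hI] at h1
    exact (TwoSidedIdeal.mem_mk' _ _ _ _ _ _ _).mp h1 x
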